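/- Let d, k be natural numbers, let A be a d × d matrix with entries in the polynomial ring ℂ[t], and let t₀ ∈ ℂ. If the kernel of the evaluated matrix A(t₀) (a d × d complex matrix) has dimension at least k as a ℂ-vector space, then (t − t₀)^k divides det A in ℂ[t]. -/

import Mathlib

open Polynomial Matrix

theorem sumExtend_inl {ι V K : Type*} [Field K] [AddCommGroup V] [Module K V] {v : ι → V}
    (hv : LinearIndependent K v) (i : ι) : Module.Basis.sumExtend hv (Sum.inl i) = v i := by
  simp only [Module.Basis.sumExtend, Module.Basis.reindex_apply, Equiv.symm_symm, Trans.trans,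
    Equiv.trans_apply, Equiv.sumCongr_apply, Sum.map_inl]
  rw [Module.Basis.extend_apply_self]
  rfl

theorem aux_dvd_det {R : Type*} [CommRing R] {d k : ℕ} (B : Matrix (Fin d) (Fin d) R) (p : R)
    (c : Fin k → Fin d) (hc : Function.Injective c) (h : ∀ i j, p ∣ B i (c j)) :
    p ^ k ∣ B.det := by
  classical
  rw [Matrix.det_apply]
  refine Finset.dvd_sum fun σ _ => ?_
  have h1 : p ^ k ∣ ∏ i, B (σ i) i := by
    calc p ^ k = ∏ _j ∈ Finset.univ.map ⟨c, hc⟩, p := by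
          rw [Finset.prod_const, Finset.card_map, Finset.card_univ, Fintype.card_fin]
      _ ∣ ∏ i ∈ Finset.univ.map ⟨c, hc⟩, B (σ i) i :=
          Finset.prod_dvd_prod_of_dvd _ _ (fun i hi => by
            obtain ⟨j, -, rfl⟩ := Finset.mem_map.mp hi
            exact h _ _)
      _ ∣ ∏ i, B (σ i) i := Finset.prod_dvd_prod_of_subset _ _ _ (Finset.subset_univ _)
  rw [Units.smul_def, zsmul_eq_mul]
  exact h1.mul_left _



/-- If `A` is a `d × d` matrix of polynomials and the kernel of the evaluated matrix
`A(t₀)` has dimension at least `k`, then `(t − t₀)^k` divides `det A` in `ℂ[t]`. -/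
theorem pow_dvd_det_of_le_finrank_ker (d k : ℕ) (A : Matrix (Fin d) (Fin d) (Polynomial ℂ))
    (t₀ : ℂ)
    (hk : k ≤ Module.finrank ℂ
      (LinearMap.ker (Matrix.toLin' (A.map (Polynomial.eval t₀))))) :
    (Polynomial.X - Polynomial.C t₀) ^ k ∣ A.det := by
  classical
  set K := LinearMap.ker (Matrix.toLin' (A.map (Polynomial.eval t₀))) with hKdef
  let bK := Module.finBasis ℂ K
  let v : Fin k → (Fin d → ℂ) := fun j => (bK (Fin.castLE hk j) : Fin d → ℂ)
  have hv : LinearIndependent ℂ v := by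
    have h1 : LinearIndependent ℂ fun j : Fin k => bK (Fin.castLE hk j) :=
      bK.linearIndependent.comp _ (Fin.castLE_injective hk)
    exact h1.map' K.subtype K.ker_subtype
  have hvK : ∀ j, (A.map (Polynomial.eval t₀)).mulVec (v j) = 0 := fun j => by
    have h2 : Matrix.toLin' (A.map (Polynomial.eval t₀)) (v j) = 0 :=
      (bK (Fin.castLE hk j)).2
    rwa [Matrix.toLin'_apply] at h2
  -- extend to a basis
  let b := Module.Basis.sumExtend hv
  haveI : Fintype (Fin k ⊕ Module.Basis.sumExtendIndex hv) := FiniteDimensional.fintypeBasisIndex b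
  haveI : Fintype (Module.Basis.sumExtendIndex hv) := Fintype.ofInjective (fun x : Module.Basis.sumExtendIndex hv => (Sum.inr x : Fin k ⊕ Module.Basis.sumExtendIndex hv)) Sum.inr_injective
  have hcard : Fintype.card (Fin k ⊕ Module.Basis.sumExtendIndex hv) = d := by
    rw [← Module.finrank_eq_card_basis b, Module.finrank_pi]
    simp
  have e : (Fin k ⊕ Module.Basis.sumExtendIndex hv) ≃ Fin d := Fintype.equivFinOfCardEq hcard
  let b' : Module.Basis (Fin d) ℂ (Fin d → ℂ) := b.reindex e
  let P : Matrix (Fin d) (Fin d) ℂ := (Pi.basisFun ℂ (Fin d)).toMatrix b'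
  have hPcol : ∀ i j, P i j = b' j i := by
    intro i j
    simp [P, Module.Basis.toMatrix_apply]
  have hPunit : IsUnit P.det := by
    haveI := (Pi.basisFun ℂ (Fin d)).invertibleToMatrix b'
    exact Matrix.isUnit_det_of_invertible P
  let c : Fin k → Fin d := fun j => e (Sum.inl j)
  have hc : Function.Injective c := fun a b h => by
    have := e.injective h
    exact Sum.inl.injEq .. ▸ (by injection this)
  have hcol : ∀ j, (fun i => P i (c j)) = v j := by
    intro j
    funext i
    rw [hPcol]
    show (b.reindex e) (e (Sum.inl j)) i = v j i
    rw [Module.Basis.reindex_apply, Equiv.symm_apply_apply, sumExtend_inl]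
  -- the product matrix
  set B : Matrix (Fin d) (Fin d) (Polynomial ℂ) := A * P.map Polynomial.C with hBdef
  have hdvd : ∀ i j, (Polynomial.X - Polynomial.C t₀) ∣ B i (c j) := by
    intro i j
    rw [dvd_iff_isRoot]
    have : B i (c j) = ∑ l, A i l * Polynomial.C (P l (c j)) := by
      simp [hBdef, Matrix.mul_apply, Matrix.map_apply]
    rw [this]
    have h0 := congrFun (hvK j) i
    simp only [Matrix.mulVec, dotProduct, Matrix.map_apply] at h0
    simp only [IsRoot, eval_finset_sum, eval_mul, eval_C]
    calc ∑ l, (A i l).eval t₀ * P l (c j)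
        = ∑ l, (A i l).eval t₀ * v j l := by
          refine Finset.sum_congr rfl fun l _ => ?_
          rw [← hcol j]
      _ = 0 := h0
  have hdet : (Polynomial.X - Polynomial.C t₀) ^ k ∣ B.det :=
    aux_dvd_det B _ c hc hdvd
  rw [hBdef, Matrix.det_mul] at hdet
  have hmap : (P.map ⇑Polynomial.C).det = Polynomial.C P.det := by
    rw [Polynomial.C.map_det, RingHom.mapMatrix_apply]
  rw [hmap] at hdet
  exact (IsUnit.dvd_mul_right (hPunit.map Polynomial.C)).mp hdet
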